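/- For every integer n ≥ 1 there exists a constant c_n > 0 such that for every finite field F and every Kakeya set K ⊆ F^n, one has |K| ≥ c_n·|F|^n. -/

import Mathlib

open Polynomial MvPolynomial

private lemma coeff_prod_of_natDegree_le'' {R : Type*} [CommSemiring R] {ι : Type*}
    (s : Finset ι) (f : ι → R[X]) (d : ι → ℕ) (h : ∀ i ∈ s, (f i).natDegree ≤ d i) :
    (∏ i ∈ s, f i).coeff (∑ i ∈ s, d i) = ∏ i ∈ s, (f i).coeff (d i) := by
  classical
  induction s using Finset.cons_induction with
  | empty => simp
  | cons a s ha ih =>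
    rw [Finset.prod_cons, Finset.sum_cons,
      Polynomial.coeff_mul_add_eq_of_natDegree_le (h a (Finset.mem_cons_self a s))
        ((Polynomial.natDegree_prod_le s f).trans
          (Finset.sum_le_sum fun i hi => h i (Finset.mem_cons_of_mem hi))),
      ih (fun i hi => h i (Finset.mem_cons_of_mem hi)), Finset.prod_cons]

private lemma kakeya_core (n m : ℕ) (hn : 1 ≤ n) (hm : 1 ≤ m)
    (F : Type) [Field F] [Fintype F]
    (hmq : n * (m - 1) < Fintype.card F)
    (K : Set (Fin n → F))
    (hK : ∀ v : Fin n → F, v ≠ 0 → ∃ x : Fin n → F, ∀ t : F, x + t • v ∈ K) :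
    m ^ n ≤ K.ncard := by
  classical
  by_contra hlt
  push_neg at hlt
  haveI : Fintype K := (Set.toFinite K).fintype
  have hKcard : K.ncard = Fintype.card K := by
    rw [← Nat.card_coe_set_eq, Nat.card_eq_fintype_card]
  -- K is nonempty
  obtain ⟨x₀, hx₀⟩ : ∃ x, x ∈ K := by
    obtain ⟨x, hx⟩ := hK (fun _ => 1) (by
      intro h
      exact one_ne_zero (congrFun h ⟨0, hn⟩))
    exact ⟨x, by simpa using hx 0⟩
  -- encode exponent vectors
  set toF : (Fin n → Fin m) → (Fin n →₀ ℕ) :=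
    fun s => Finsupp.equivFunOnFinite.symm (fun i => (s i : ℕ)) with htoF
  have toF_apply : ∀ s i, toF s i = (s i : ℕ) := fun s i => rfl
  have toF_inj : Function.Injective toF := by
    intro a b hab
    have h2 : (fun i => (a i : ℕ)) = fun i => (b i : ℕ) :=
      Finsupp.equivFunOnFinite.symm.injective hab
    funext i
    exact Fin.val_injective (congrFun h2 i)
  -- the evaluation linear map
  set L : ((Fin n → Fin m) → F) →ₗ[F] (K → F) :=
    { toFun := fun c x => ∑ s : Fin n → Fin m,
        c s * MvPolynomial.eval (x : Fin n → F) (MvPolynomial.monomial (toF s) 1)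
      map_add' := by
        intro a b; funext x; simp [add_mul, Finset.sum_add_distrib]
      map_smul' := by
        intro r a; funext x
        simp [Finset.mul_sum, mul_assoc] } with hL
  have hnotinj : ¬ Function.Injective L := by
    intro hinj
    have hle := LinearMap.finrank_le_finrank_of_injective hinj
    rw [Module.finrank_pi, Module.finrank_pi, Fintype.card_fun] at hle
    simp only [Fintype.card_fin] at hle
    omega
  have hker : LinearMap.ker L ≠ ⊥ := fun h => hnotinj (LinearMap.ker_eq_bot.mp h)
  obtain ⟨c, hcker, hc0⟩ := (Submodule.ne_bot_iff _).mp hker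
  rw [LinearMap.mem_ker] at hcker
  -- the polynomial
  set p : MvPolynomial (Fin n) F :=
    ∑ s : Fin n → Fin m, MvPolynomial.monomial (toF s) (c s) with hp
  have hpcoeff : ∀ s₀, MvPolynomial.coeff (toF s₀) p = c s₀ := by
    intro s₀
    rw [hp, MvPolynomial.coeff_sum, Finset.sum_eq_single s₀]
    · simp [MvPolynomial.coeff_monomial]
    · intro b _ hb
      rw [MvPolynomial.coeff_monomial, if_neg (fun h => hb (toF_inj h))]
    · simp
  have hp0 : p ≠ 0 := by
    obtain ⟨s₀, hs₀⟩ := Function.ne_iff.mp hc0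
    intro h
    apply hs₀
    have : MvPolynomial.coeff (toF s₀) p = 0 := by rw [h, MvPolynomial.coeff_zero]
    rw [hpcoeff s₀] at this
    simpa using this
  have hpK : ∀ x : Fin n → F, x ∈ K → MvPolynomial.eval x p = 0 := by
    intro x hx
    have := congrFun hcker ⟨x, hx⟩
    simp only [hL, LinearMap.coe_mk, AddHom.coe_mk, Pi.zero_apply] at this
    rw [hp, map_sum]
    simpa [MvPolynomial.eval_monomial] using this
  have hdeg : p.totalDegree ≤ n * (m - 1) := by
    rw [hp]
    refine (MvPolynomial.totalDegree_finset_sum _ _).trans (Finset.sup_le fun s _ => ?_)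
    refine (MvPolynomial.totalDegree_monomial_le _ _).trans ?_
    rw [Finsupp.sum_fintype _ _ (fun _ => rfl)]
    refine le_trans (Finset.sum_le_sum (g := fun _ => m - 1) fun i _ => ?_) ?_
    · show (toF s) i ≤ m - 1
      rw [toF_apply]
      have := (s i).isLt
      omega
    · rw [Finset.sum_const, Finset.card_univ, Fintype.card_fin, smul_eq_mul]
  have hdq : p.totalDegree < Fintype.card F := lt_of_le_of_lt hdeg hmq
  -- case totalDegree = 0
  by_cases hd0 : p.totalDegree = 0
  · have hpc : p = MvPolynomial.C (MvPolynomial.coeff 0 p) := by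
      conv_lhs => rw [← MvPolynomial.sum_homogeneousComponent p]
      rw [hd0]
      simp [MvPolynomial.homogeneousComponent_zero]
    have := hpK x₀ hx₀
    rw [hpc, MvPolynomial.eval_C] at this
    exact hp0 (by rw [hpc, this, map_zero])
  -- main case
  have hd1 : 1 ≤ p.totalDegree := Nat.one_le_iff_ne_zero.mpr hd0
  set pd := MvPolynomial.homogeneousComponent p.totalDegree p with hpd
  have hpdne : pd ≠ 0 := by
    have hsupp : p.support.Nonempty :=
      Finset.nonempty_iff_ne_empty.mpr (fun h => hp0 (MvPolynomial.support_eq_empty.mp h))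
    obtain ⟨s₁, hs₁, hs₁d⟩ :=
      Finset.exists_mem_eq_sup p.support hsupp (fun s => Finsupp.degree s)
    intro h
    have htd : p.totalDegree = Finsupp.degree s₁ := by
      rw [← hs₁d]
      rfl
    have hc1 : MvPolynomial.coeff s₁ pd = MvPolynomial.coeff s₁ p := by
      rw [hpd, MvPolynomial.coeff_homogeneousComponent, if_pos htd.symm]
    rw [h, MvPolynomial.coeff_zero] at hc1
    exact (MvPolynomial.mem_support_iff.mp hs₁) hc1.symm
  have hpdeval : ∀ v : Fin n → F, MvPolynomial.eval v pd = 0 := by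
    intro v
    by_cases hv : v = 0
    · subst hv
      rw [hpd, MvPolynomial.homogeneousComponent_apply, map_sum]
      apply Finset.sum_eq_zero
      intro s hs
      simp only [Finset.mem_filter] at hs
      rw [MvPolynomial.eval_monomial]
      have hsne : s ≠ 0 := by
        intro h
        rw [h] at hs
        simp [Finsupp.degree] at hs
        omega
      obtain ⟨i, hi⟩ : ∃ i, s i ≠ 0 := by
        by_contra hcon
        push_neg at hcon
        exact hsne (Finsupp.ext hcon)
      rw [Finsupp.prod, Finset.prod_eq_zero (Finsupp.mem_support_iff.mpr hi)]
      · ring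
      · simp [zero_pow hi]
    · obtain ⟨x, hx⟩ := hK v hv
      set f : Fin n → F[X] := fun i => Polynomial.C (x i) + Polynomial.X * Polynomial.C (v i)
        with hf
      have hfdeg : ∀ i, (f i).natDegree ≤ 1 := by
        intro i
        refine (Polynomial.natDegree_add_le _ _).trans ?_
        simp only [Polynomial.natDegree_C]
        refine max_le (by omega) ((Polynomial.natDegree_mul_le).trans ?_)
        simp
      have hfpow : ∀ (i : Fin n) (k : ℕ), ((f i) ^ k).natDegree ≤ k := by
        intro i k
        refine (Polynomial.natDegree_pow_le).trans ?_
        calc k * (f i).natDegree ≤ k * 1 := Nat.mul_le_mul_left _ (hfdeg i)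
          _ = k := mul_one k
      set Q : F[X] := MvPolynomial.eval₂ Polynomial.C f p with hQ
      have hQeval : ∀ t : F, Q.eval t = MvPolynomial.eval (x + t • v) p := by
        intro t
        have h1 := MvPolynomial.eval₂_comp_left (Polynomial.evalRingHom t)
          Polynomial.C f p
        have h2 : (Polynomial.evalRingHom t).comp Polynomial.C = RingHom.id F :=
          RingHom.ext fun a => by simp
        have h3 : (Polynomial.evalRingHom t) ∘ f = (x + t • v) := by
          funext i
          simp only [hf, Function.comp_apply, Pi.add_apply, Pi.smul_apply, smul_eq_mul,
            Polynomial.eval_add, Polynomial.eval_mul, Polynomial.eval_C, Polynomial.eval_X,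
            Polynomial.coe_evalRingHom]
          try ring
        rw [h2, h3] at h1
        have : Q.eval t = (Polynomial.evalRingHom t) Q := rfl
        rw [this, hQ, h1, MvPolynomial.eval₂_id]
      have hQdeg : Q.natDegree ≤ p.totalDegree := by
        rw [hQ, MvPolynomial.eval₂_eq]
        refine Polynomial.natDegree_sum_le_of_forall_le _ _ fun s hs => ?_
        refine (Polynomial.natDegree_mul_le).trans ?_
        rw [Polynomial.natDegree_C]
        refine le_trans (by omega : 0 + (∏ i ∈ s.support, f i ^ s i).natDegree ≤
          (∏ i ∈ s.support, f i ^ s i).natDegree) ?_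
        refine (Polynomial.natDegree_prod_le _ _).trans ?_
        refine le_trans (Finset.sum_le_sum (g := fun i => s i) fun i _ => hfpow i (s i)) ?_
        calc ∑ i ∈ s.support, s i = s.sum fun _ e => e := by
              simp [Finsupp.sum]
          _ ≤ p.totalDegree := MvPolynomial.le_totalDegree hs
      have hQ0 : Q = 0 := by
        refine Polynomial.eq_zero_of_natDegree_lt_card_of_eval_eq_zero' Q Finset.univ
          (fun t _ => ?_) ?_
        · rw [hQeval t]
          exact hpK _ (hx t)
        · rw [Finset.card_univ]
          exact lt_of_le_of_lt hQdeg hdq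
      have hcoeff : Q.coeff p.totalDegree = MvPolynomial.eval v pd := by
        rw [hQ, MvPolynomial.eval₂_eq, Polynomial.finset_sum_coeff,
          hpd, MvPolynomial.homogeneousComponent_apply, map_sum, Finset.sum_filter]
        refine Finset.sum_congr rfl fun s hs => ?_
        have hsle : (s.sum fun _ e => e) ≤ p.totalDegree := MvPolynomial.le_totalDegree hs
        by_cases hsd : Finsupp.degree s = p.totalDegree
        · rw [if_pos hsd, MvPolynomial.eval_monomial, Polynomial.coeff_C_mul]
          congr 1
          have hdsum : p.totalDegree = ∑ i ∈ s.support, s i := by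
            rw [← hsd, Finsupp.degree]
            rfl
          rw [hdsum, coeff_prod_of_natDegree_le'' _ _ _ (fun i _ => hfpow i (s i))]
          rw [Finsupp.prod]
          refine Finset.prod_congr rfl fun i _ => ?_
          have := Polynomial.coeff_pow_of_natDegree_le (m := s i) (hfdeg i)
          rw [mul_one] at this
          rw [this]
          congr 1
          simp [hf]
        · rw [if_neg hsd]
          refine Polynomial.coeff_eq_zero_of_natDegree_lt ?_
          have hlt : (s.sum fun _ e => e) < p.totalDegree := by
            rw [Finsupp.degree] at hsd
            rw [Finsupp.sum]
            rcases lt_or_eq_of_le hsle with h | h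
            · rwa [Finsupp.sum] at h
            · exact absurd (by rwa [Finsupp.sum] at h) hsd
          refine lt_of_le_of_lt ?_ hlt
          refine (Polynomial.natDegree_mul_le).trans ?_
          rw [Polynomial.natDegree_C, zero_add]
          refine (Polynomial.natDegree_prod_le _ _).trans ?_
          refine le_trans (Finset.sum_le_sum (g := fun i => s i) fun i _ => hfpow i (s i))
            (le_of_eq ?_)
          simp [Finsupp.sum]
      rw [← hcoeff, hQ0, Polynomial.coeff_zero]
  have hfin : pd = 0 := by
    refine (MvPolynomial.homogeneousComponent_isHomogeneous p.totalDegree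
      p).eq_zero_of_forall_eval_eq_zero_of_le_card hpdeval ?_
    rw [Cardinal.mk_fintype]
    exact_mod_cast le_of_lt hdq
  exact hpdne hfin

/-- Dvir's theorem: Kakeya sets in `F^n` over a finite field `F` have full dimension,
i.e. cardinality at least `c_n · |F|^n`. -/
theorem finite_field_kakeya (n : ℕ) (hn : 1 ≤ n) :
    ∃ c : ℝ, 0 < c ∧
      ∀ (F : Type) [Field F] [Fintype F],
        ∀ K : Set (Fin n → F),
          (∀ v : Fin n → F, v ≠ 0 → ∃ x : Fin n → F, ∀ t : F, x + t • v ∈ K) →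
          c * (Fintype.card F : ℝ) ^ n ≤ (K.ncard : ℝ) := by
  have hnR : (0:ℝ) < (n:ℝ) ^ n := by
    apply pow_pos
    exact_mod_cast hn
  refine ⟨1 / (n:ℝ) ^ n, one_div_pos.mpr hnR, ?_⟩
  intro F _ _ K hK
  set q := Fintype.card F with hq
  have hq1 : 1 ≤ q := Fintype.card_pos
  set m := (q + n - 1) / n with hm
  have hm1 : 1 ≤ m := (Nat.one_le_div_iff (by omega)).mpr (by omega)
  have hnm_le : n * m ≤ q + n - 1 := by
    rw [hm, mul_comm]
    exact Nat.div_mul_le_self _ _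
  have hq_le : q ≤ n * m := by
    have h1 := Nat.div_add_mod (q + n - 1) n
    have h2 := Nat.mod_lt (q + n - 1) (show 0 < n by omega)
    rw [← hm] at h1
    omega
  have hmul : n * (m - 1) + n * 1 = n * m := by
    rw [← Nat.mul_add]
    congr 1
    omega
  have hcore := kakeya_core n m hn hm1 F (by omega) K hK
  have h2 : ((m : ℝ)) ^ n ≤ (K.ncard : ℝ) := by
    calc ((m : ℝ)) ^ n = ((m ^ n : ℕ) : ℝ) := by push_cast; ring
      _ ≤ (K.ncard : ℝ) := by exact_mod_cast hcore
  have h1 : ((q : ℝ)) ^ n ≤ ((n : ℝ) * m) ^ n := by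
    apply pow_le_pow_left₀ (by positivity)
    exact_mod_cast hq_le
  calc 1 / (n:ℝ) ^ n * (q : ℝ) ^ n ≤ 1 / (n:ℝ) ^ n * ((n : ℝ) * m) ^ n := by
        apply mul_le_mul_of_nonneg_left h1
        positivity
    _ = (m : ℝ) ^ n := by
        rw [mul_pow]
        field_simp
    _ ≤ (K.ncard : ℝ) := h2
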